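/- Partition Theorem: Let S have length n, W the collection of k+1 words W'_i = S[Ω(i), PSA[i]-1] · #_i, l = k+1, m = n+l. Then the multi-string BWT of W satisfies BWT(W)[i] = BWT(S)[i] for 0 ≤ i < l, BWT(W)[i] = # for l ≤ i < 2l, and BWT(W)[i] = BWT(S)[i-l] for 2l ≤ i < m. Consequently BWT(S) = BWT(W)[0..l-1] ++ BWT(W)[2l..m-1]. -/

import Mathlib

/-- Suffix of the extended string `S` (length `n`, sentinel `S n = 0`) starting at `i`,
as a list of characters. -/
def sfx (S : ℕ → ℕ) (n i : ℕ) : List ℕ :=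
  (List.range (n + 1 - i)).map (fun t => S (i + t))

/-- `S` is a string of length `n` over a positive alphabet with the unique smallest
sentinel `0` appended at position `n`. -/
def Sentinel (S : ℕ → ℕ) (n : ℕ) : Prop :=
  S n = 0 ∧ ∀ i < n, 0 < S i

/-- `SA` is the suffix array of `S` on positions `0..n`: a bijection of `{0,…,n}`
listing the suffixes in strictly increasing lexicographic order. -/
def IsSuffixArray (S : ℕ → ℕ) (n : ℕ) (SA : ℕ → ℕ) : Prop :=
  Set.BijOn SA (Set.Iic n) (Set.Iic n) ∧
  ∀ i j : ℕ, i ≤ n → j ≤ n → i < j →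
    List.Lex (· < ·) (sfx S n (SA i)) (sfx S n (SA j))

/-- `Ω(j) = max({-1} ∪ {t ∈ PSA : t ≤ PSA[j]-1})`, where `PSA = SA[0..k]`. -/
def Omega (SA : ℕ → ℕ) (k j : ℕ) : ℤ :=
  (insert (-1 : ℤ)
    (((Finset.range (k+1)).filter (fun t => SA t < SA j)).image
      (fun t => (SA t : ℤ)))).max' (Finset.insert_nonempty _ _)

/-- Character of `S` at an integer position: positions `-1` and `n` carry the
sentinel `0` (written `$`), characters of `Σ` are positive. -/
def Sc (S : ℕ → ℕ) (n : ℕ) (q : ℤ) : ℤ :=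
  if 0 ≤ q ∧ q < n then (S q.toNat : ℤ) else 0

/-- `BWT(S)[i] = S[SA[i]-1]` with `S[-1] = $`. -/
def bwtS (S : ℕ → ℕ) (n : ℕ) (SA : ℕ → ℕ) (i : ℕ) : ℤ :=
  Sc S n ((SA i : ℤ) - 1)

/-- The word `W_j = S[Ω(j) .. PSA[j]-1]` as a list of characters. -/
def wordList (S : ℕ → ℕ) (n : ℕ) (SA : ℕ → ℕ) (k j : ℕ) : List ℤ :=
  (List.range ((SA j : ℤ) - Omega SA k j).toNat).map
    (fun t => Sc S n (Omega SA k j + t))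

/-- The marked word `W'_j = W_j · #_j`, where the distinct markers are encoded as
`#_j = j - (k+1)`, so that `#_0 < … < #_k < $ = 0 < Σ`. -/
def wordM (S : ℕ → ℕ) (n : ℕ) (SA : ℕ → ℕ) (k j : ℕ) : List ℤ :=
  wordList S n SA k j ++ [(j : ℤ) - (k + 1)]

/-- A position `q ∈ {0,…,n}` of `S` viewed in `{-1,…,n-1}`: position `n` is
identified with `-1` (first right rotation). -/
def posZ (n q : ℕ) : ℤ := if q = n then -1 else (q : ℤ)

/-- `SAW`/`DAW` form the (suffix array, document array) pair for the collection
`Wc 0, …, Wc (l-1)`: the `i`-th lexicographically smallest of the `m` suffixes of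
the collection is `(Wc (DAW i)).drop (SAW i)`. -/
def IsMSA (Wc : ℕ → List ℤ) (l m : ℕ) (SAW DAW : ℕ → ℕ) : Prop :=
  (∀ i < m, DAW i < l ∧ SAW i < (Wc (DAW i)).length) ∧
  (∀ j < l, ∀ p < (Wc j).length, ∃! i, i < m ∧ DAW i = j ∧ SAW i = p) ∧
  ∀ i j : ℕ, i < m → j < m → i < j →
    List.Lex (· < ·) ((Wc (DAW i)).drop (SAW i)) ((Wc (DAW j)).drop (SAW j))

/-- Multi-string BWT: the character cyclically preceding the `i`-th smallest
suffix within its word. -/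
def bwtW (Wc : ℕ → List ℤ) (SAW DAW : ℕ → ℕ) (i : ℕ) : ℤ :=
  (Wc (DAW i)).getD ((SAW i + (Wc (DAW i)).length - 1) % (Wc (DAW i)).length) 0

namespace PartAux

open List

/-! ### generic Lex helpers -/

lemma lex_cons_cases {α : Type*} [LinearOrder α] {a b : α} {l1 l2 : List α}
    (h : List.Lex (· < ·) (a :: l1) (b :: l2)) :
    a < b ∨ (a = b ∧ List.Lex (· < ·) l1 l2) := by
  cases h with
  | rel h => exact Or.inl h
  | cons h => exact Or.inr ⟨rfl, h⟩

lemma lex_irrefl {α : Type*} [LinearOrder α] (l : List α) : ¬ List.Lex (· < ·) l l :=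
  irrefl l

lemma lex_asymm {α : Type*} [LinearOrder α] {l1 l2 : List α}
    (h : List.Lex (· < ·) l1 l2) : ¬ List.Lex (· < ·) l2 l1 :=
  asymm h

/-! ### sfx facts -/

lemma sfx_n (S : ℕ → ℕ) (n : ℕ) : sfx S n n = [S n] := by
  show (List.range (n+1-n)).map _ = _
  have : n + 1 - n = 1 := by omega
  rw [this]
  rfl

lemma sfx_cons (S : ℕ → ℕ) {n i : ℕ} (h : i < n) :
    sfx S n i = S i :: sfx S n (i+1) := by
  unfold sfx
  have h1 : n + 1 - i = (n - i) + 1 := by omega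
  have h2 : n + 1 - (i+1) = n - i := by omega
  rw [h1, h2, List.range_succ_eq_map, List.map_cons, List.map_map]
  refine congrArg₂ _ (by simp) (List.map_congr_left ?_)
  intro t _
  simp only [Function.comp_apply]
  congr 1
  omega


variable {S SA : ℕ → ℕ} {n k : ℕ}

lemma SA_le (hSA : IsSuffixArray S n SA) {i : ℕ} (h : i ≤ n) : SA i ≤ n :=
  hSA.1.mapsTo h

lemma SA_inj (hSA : IsSuffixArray S n SA) {i j : ℕ} (hi : i ≤ n) (hj : j ≤ n)
    (h : SA i = SA j) : i = j :=
  hSA.1.injOn hi hj h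

lemma SA_surj (hSA : IsSuffixArray S n SA) {r : ℕ} (h : r ≤ n) :
    ∃ i, i ≤ n ∧ SA i = r := by
  obtain ⟨i, hi, he⟩ := hSA.1.surjOn (show r ∈ Set.Iic n from h)
  exact ⟨i, hi, he⟩

lemma SA_zero (hS : Sentinel S n) (hSA : IsSuffixArray S n SA) (hn : 0 < n) :
    SA 0 = n := by
  obtain ⟨i, hi, he⟩ := SA_surj hSA (le_refl n)
  by_contra hne
  have hi0 : i ≠ 0 := by rintro rfl; exact hne he
  have h := hSA.2 0 i (Nat.zero_le n) hi (Nat.pos_of_ne_zero hi0)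
  rw [he, sfx_n, hS.1] at h
  have hlt : SA 0 < n := lt_of_le_of_ne (SA_le hSA (Nat.zero_le n)) hne
  rw [sfx_cons S hlt] at h
  rcases lex_cons_cases h with h' | ⟨h1, h2⟩
  · exact Nat.not_lt_zero _ h'
  · have := hS.2 (SA 0) hlt
    omega

lemma SA_rank_reflect (hSA : IsSuffixArray S n SA) {i j : ℕ} (hi : i ≤ n) (hj : j ≤ n)
    (h : List.Lex (· < ·) (sfx S n (SA i)) (sfx S n (SA j))) : i < j := by
  rcases lt_trichotomy i j with h' | h' | h'
  · exact h'
  · subst h'; exact absurd h (lex_irrefl _)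
  · exact absurd h (lex_asymm (hSA.2 j i hj hi h'))

/-! ### Omega facts -/

lemma neg_one_le_omega (SA : ℕ → ℕ) (k j : ℕ) : -1 ≤ Omega SA k j :=
  Finset.le_max' _ _ (Finset.mem_insert_self _ _)

lemma omega_lt (SA : ℕ → ℕ) (k j : ℕ) : Omega SA k j < SA j := by
  rw [Omega, Finset.max'_lt_iff]
  intro b hb
  rcases Finset.mem_insert.1 hb with rfl | hb
  · have : (0:ℤ) ≤ SA j := Int.natCast_nonneg _
    omega
  · obtain ⟨t, ht, rfl⟩ := Finset.mem_image.1 hb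
    exact_mod_cast (Finset.mem_filter.1 ht).2

lemma omega_cases (SA : ℕ → ℕ) (k j : ℕ) :
    Omega SA k j = -1 ∨ ∃ t, t ≤ k ∧ SA t < SA j ∧ (SA t : ℤ) = Omega SA k j := by
  have h := Finset.max'_mem _ (Finset.insert_nonempty (-1 : ℤ)
    ((((Finset.range (k+1)).filter (fun t => SA t < SA j))).image (fun t => (SA t : ℤ))))
  rw [← Omega] at h
  rcases Finset.mem_insert.1 h with h | h
  · exact Or.inl h
  · obtain ⟨t, ht, he⟩ := Finset.mem_image.1 h
    obtain ⟨ht1, ht2⟩ := Finset.mem_filter.1 ht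
    exact Or.inr ⟨t, by have := Finset.mem_range.1 ht1; omega, ht2, he⟩

lemma le_omega {t j : ℕ} (ht : t ≤ k) (h : SA t < SA j) : (SA t : ℤ) ≤ Omega SA k j := by
  apply Finset.le_max'
  exact Finset.mem_insert_of_mem (Finset.mem_image.2 ⟨t, Finset.mem_filter.2
    ⟨Finset.mem_range.2 (by omega), h⟩, rfl⟩)

/-! ### the partition: existence and uniqueness of the word containing a position -/

lemma doc_exists (hS : Sentinel S n) (hSA : IsSuffixArray S n SA) (hk : k < n)
    {q : ℤ} (h1 : -1 ≤ q) (h2 : q < n) :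
    ∃ j, j ≤ k ∧ Omega SA k j ≤ q ∧ q < SA j := by
  have hSA0 : SA 0 = n := SA_zero hS hSA (by omega)
  have h0T : 0 ∈ (Finset.range (k+1)).filter (fun t => q < (SA t : ℤ)) := by
    refine Finset.mem_filter.2 ⟨Finset.mem_range.2 (by omega), ?_⟩
    rw [hSA0]; exact h2
  obtain ⟨j, hjT, hmin⟩ := Finset.exists_min_image _ (fun t => SA t) ⟨0, h0T⟩
  obtain ⟨hjr, hjq⟩ := Finset.mem_filter.1 hjT
  refine ⟨j, by have := Finset.mem_range.1 hjr; omega, ?_, hjq⟩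
  apply Finset.max'_le
  intro b hb
  rcases Finset.mem_insert.1 hb with rfl | hb
  · exact h1
  · obtain ⟨t, ht, rfl⟩ := Finset.mem_image.1 hb
    obtain ⟨ht1, ht2⟩ := Finset.mem_filter.1 ht
    by_contra hcon
    push_neg at hcon
    have htT : t ∈ (Finset.range (k+1)).filter (fun t => q < (SA t : ℤ)) :=
      Finset.mem_filter.2 ⟨ht1, hcon⟩
    exact absurd ht2 (not_lt.2 (hmin t htT))

lemma doc_unique (hSA : IsSuffixArray S n SA) (hk : k < n) {q : ℤ} {j j' : ℕ}
    (hj : j ≤ k) (hj' : j' ≤ k)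
    (h1 : Omega SA k j ≤ q) (h2 : q < SA j)
    (h1' : Omega SA k j' ≤ q) (h2' : q < SA j') : j = j' := by
  rcases lt_trichotomy (SA j) (SA j') with h | h | h
  · have := le_omega (k := k) hj h
    omega
  · exact SA_inj hSA (by omega) (by omega) h
  · have := le_omega (k := k) hj' h
    omega

noncomputable def doc (SA : ℕ → ℕ) (k : ℕ) (q : ℤ) : ℕ :=
  if h : ∃ j, j ≤ k ∧ Omega SA k j ≤ q ∧ q < SA j then h.choose else 0

lemma doc_spec {q : ℤ} (h : ∃ j, j ≤ k ∧ Omega SA k j ≤ q ∧ q < SA j) :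
    doc SA k q ≤ k ∧ Omega SA k (doc SA k q) ≤ q ∧ q < SA (doc SA k q) := by
  rw [doc, dif_pos h]
  exact h.choose_spec


/-! ### Sc facts -/

lemma Sc_nonneg (S : ℕ → ℕ) (n : ℕ) (q : ℤ) : 0 ≤ Sc S n q := by
  rw [Sc]; split
  · exact Int.natCast_nonneg _
  · exact le_refl 0

lemma Sc_eq (S : ℕ → ℕ) (n : ℕ) {q : ℤ} (h1 : 0 ≤ q) (h2 : q < n) :
    Sc S n q = (S q.toNat : ℤ) := if_pos ⟨h1, h2⟩

lemma Sc_pos (hS : Sentinel S n) {q : ℤ} (h1 : 0 ≤ q) (h2 : q < n) :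
    0 < Sc S n q := by
  rw [Sc_eq S n h1 h2]
  exact_mod_cast hS.2 q.toNat (by omega)

/-! ### trunc : the suffixes of the marked words -/

lemma wordList_eq (S : ℕ → ℕ) (n : ℕ) (SA : ℕ → ℕ) (k j : ℕ) :
    wordList S n SA k j =
      (List.range ((SA j : ℤ) - Omega SA k j).toNat).map
        (fun t : ℕ => Sc S n (Omega SA k j + (t:ℤ))) := by
  rw [wordList]
  have : (do let a ← List.range ((SA j : ℤ) - Omega SA k j).toNat; pure ((a:ℕ):ℤ)) =
      (List.range ((SA j : ℤ) - Omega SA k j).toNat).map (fun a : ℕ => (a:ℤ)) := by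
    simp only [List.pure_def, List.bind_eq_flatMap, ← List.map_eq_flatMap]
  rw [this, List.map_map]
  rfl

def trunc (S : ℕ → ℕ) (n : ℕ) (SA : ℕ → ℕ) (k : ℕ) (q : ℤ) (j : ℕ) : List ℤ :=
  (List.range (((SA j : ℤ) - q).toNat)).map (fun t : ℕ => Sc S n (q + (t:ℤ)))
    ++ [(j:ℤ) - (k+1)]

lemma trunc_end (S : ℕ → ℕ) (n : ℕ) (SA : ℕ → ℕ) (k : ℕ) (j : ℕ) :
    trunc S n SA k (SA j) j = [(j:ℤ) - (k+1)] := by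
  simp [trunc]

lemma trunc_cons {q : ℤ} {j : ℕ} (h : q < SA j) :
    trunc S n SA k q j = Sc S n q :: trunc S n SA k (q+1) j := by
  have h1 : ((SA j : ℤ) - q).toNat = ((SA j : ℤ) - (q+1)).toNat + 1 := by omega
  rw [trunc, h1, List.range_succ_eq_map, List.map_cons, List.map_map]
  rw [trunc, List.cons_append]
  refine congrArg₂ _ (by simp) (congrArg₂ _ (List.map_congr_left ?_) rfl)
  intro t _
  simp only [Function.comp_apply]
  congr 1
  push_cast [Nat.succ_eq_add_one]
  ring

lemma drop_map_range {α : Type*} (f : ℕ → α) (L p : ℕ) :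
    ((List.range L).map f).drop p = (List.range (L - p)).map (fun t => f (p + t)) := by
  apply List.ext_getElem
  · simp only [List.length_drop, List.length_map, List.length_range]
  · intro i h1 h2
    simp only [List.getElem_drop, List.getElem_map, List.getElem_range]

lemma length_wordM (S : ℕ → ℕ) (n : ℕ) (SA : ℕ → ℕ) (k j : ℕ) :
    (wordM S n SA k j).length = ((SA j : ℤ) - Omega SA k j).toNat + 1 := by
  rw [wordM, wordList_eq]
  simp

lemma drop_wordM {q : ℤ} {j : ℕ} (h1 : Omega SA k j ≤ q) (h2 : q ≤ SA j) :
    (wordM S n SA k j).drop ((q - Omega SA k j).toNat) = trunc S n SA k q j := by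
  have hol : Omega SA k j < SA j := omega_lt SA k j
  rw [wordM, wordList_eq, List.drop_append_of_le_length (by simp; omega)]
  rw [drop_map_range, trunc]
  have h3 : ((SA j : ℤ) - Omega SA k j).toNat - (q - Omega SA k j).toNat
      = ((SA j : ℤ) - q).toNat := by omega
  rw [h3]
  refine congrArg₂ _ (List.map_congr_left ?_) rfl
  intro t _
  congr 1
  omega

lemma wordM_getD_lt {j : ℕ} {t : ℕ} (h : t < ((SA j : ℤ) - Omega SA k j).toNat) :
    (wordM S n SA k j).getD t 0 = Sc S n (Omega SA k j + t) := by
  rw [wordM, wordList_eq, List.getD_append _ _ _ _ (by simpa using h)]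
  rw [List.getD_eq_getElem _ _ (by simpa using h)]
  simp

lemma wordM_getD_last (S : ℕ → ℕ) (n : ℕ) (SA : ℕ → ℕ) (k j : ℕ) :
    (wordM S n SA k j).getD (((SA j : ℤ) - Omega SA k j).toNat) 0 = (j:ℤ) - (k+1) := by
  rw [wordM, wordList_eq, List.getD_append_right _ _ _ _ (by simp)]
  simp


/-! ### the key comparison lemma -/

lemma cmp_aux (hk : k < n) (hS : Sentinel S n) (hSA : IsSuffixArray S n SA) :
    ∀ N : ℕ, ∀ (q q' : ℤ) (j j' : ℕ), ((SA j : ℤ) - q).toNat ≤ N →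
    j ≤ k → j' ≤ k →
    Omega SA k j ≤ q → q < SA j → Omega SA k j' ≤ q' → q' < SA j' →
    List.Lex (· < ·) (sfx S n (if q = -1 then n else q.toNat))
      (sfx S n (if q' = -1 then n else q'.toNat)) →
    List.Lex (· < ·) (trunc S n SA k q j) (trunc S n SA k q' j') := by
  intro N
  induction N with
  | zero =>
    intro q q' j j' hN hj hj' ho1 hq1 ho2 hq2 hlex
    omega
  | succ N ih =>
    intro q q' j j' hN hj hj' ho1 hq1 ho2 hq2 hlex
    have hjn : j ≤ n := by omega
    have hj'n : j' ≤ n := by omega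
    have hSAj : SA j ≤ n := SA_le hSA hjn
    have hSAj' : SA j' ≤ n := SA_le hSA hj'n
    have hqlow : -1 ≤ q := le_trans (neg_one_le_omega SA k j) ho1
    have hq'low : -1 ≤ q' := le_trans (neg_one_le_omega SA k j') ho2
    rw [trunc_cons hq1, trunc_cons hq2]
    by_cases hq : q = -1
    · by_cases hq' : q' = -1
      · rw [hq, hq'] at hlex
        simp only [if_pos rfl] at hlex
        exact absurd hlex (lex_irrefl _)
      · have h0q' : 0 ≤ q' := by omega
        apply List.Lex.rel
        have : Sc S n q = 0 := by rw [Sc, if_neg (by omega)]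
        rw [this]
        exact Sc_pos hS h0q' (by omega)
    · have h0q : 0 ≤ q := by omega
      have hqn : q.toNat < n := by omega
      rw [if_neg hq, sfx_cons S hqn] at hlex
      by_cases hq' : q' = -1
      · exfalso
        rw [hq', if_pos rfl, sfx_n, hS.1] at hlex
        rcases lex_cons_cases hlex with h | ⟨h1, h2⟩
        · exact Nat.not_lt_zero _ h
        · exact absurd (hS.2 q.toNat hqn) (by omega)
      · have h0q' : 0 ≤ q' := by omega
        have hq'n : q'.toNat < n := by omega
        rw [if_neg hq', sfx_cons S hq'n] at hlex
        rcases lex_cons_cases hlex with h | ⟨h1, h2⟩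
        · apply List.Lex.rel
          rw [Sc_eq S n h0q (by omega), Sc_eq S n h0q' (by omega)]
          exact_mod_cast h
        · have hsc : Sc S n q = Sc S n q' := by
            rw [Sc_eq S n h0q (by omega), Sc_eq S n h0q' (by omega), h1]
          rw [hsc]
          apply List.Lex.cons
          by_cases hb : q + 1 = (SA j : ℤ)
          · by_cases hb' : q' + 1 = (SA j' : ℤ)
            · have he1 : SA j = q.toNat + 1 := by omega
              have he2 : SA j' = q'.toNat + 1 := by omega
              rw [hb, hb', trunc_end, trunc_end]
              have hjj : j < j' := SA_rank_reflect hSA hjn hj'n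
                (by rw [he1, he2]; exact h2)
              exact List.Lex.rel (by omega)
            · rw [hb, trunc_end]
              rw [trunc_cons (show q' + 1 < (SA j' : ℤ) by omega)]
              apply List.Lex.rel
              have := Sc_pos hS (show (0:ℤ) ≤ q' + 1 by omega)
                (show q' + 1 < (n:ℤ) by omega)
              have hjk : (j : ℤ) ≤ k := by exact_mod_cast hj
              omega
          · by_cases hb' : q' + 1 = (SA j' : ℤ)
            · exfalso
              -- q+1 is not in PSA, so its suffix rank exceeds k ≥ j'
              have hr : q.toNat + 1 ≤ n := by omega
              obtain ⟨i, hin, hie⟩ := SA_surj hSA hr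
              have hik : k < i := by
                by_contra hik
                push_neg at hik
                have hlt : SA i < SA j := by omega
                have := le_omega (k := k) hik hlt
                omega
              have horder := hSA.2 j' i hj'n hin (by omega)
              have he1 : SA j' = q'.toNat + 1 := by omega
              rw [hie, he1] at horder
              exact absurd h2 (lex_asymm horder)
            · -- recurse
              have hrec := ih (q+1) (q'+1) j j' (by omega) hj hj'
                (by omega) (by omega) (by omega) (by omega) ?_
              · exact hrec
              · rw [if_neg (by omega), if_neg (by omega),
                  show ((q+1:ℤ)).toNat = q.toNat + 1 by omega,
                  show ((q'+1:ℤ)).toNat = q'.toNat + 1 by omega]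
                exact h2

/-! ### injectivity of (word, position) ↦ suffix string -/

lemma pair_inj {j j' p p' : ℕ}
    (hp : p ≤ ((SA j : ℤ) - Omega SA k j).toNat)
    (hp' : p' ≤ ((SA j' : ℤ) - Omega SA k j').toNat)
    (h : (wordM S n SA k j).drop p = (wordM S n SA k j').drop p') :
    j = j' ∧ p = p' := by
  have hlast := congrArg List.getLast? h
  rw [wordM, wordM, wordList_eq, wordList_eq,
    List.drop_append_of_le_length (by simpa using hp),
    List.drop_append_of_le_length (by simpa using hp'),
    List.getLast?_concat, List.getLast?_concat] at hlast
  have hjj : j = j' := by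
    have := Option.some.inj hlast
    omega
  subst hjj
  have hlen := congrArg List.length h
  rw [List.length_drop, List.length_drop, length_wordM] at hlen
  exact ⟨rfl, by omega⟩

/-! ### two sorted enumerations of the same finite set of strings agree -/

lemma enum_unique {m : ℕ} (f g : ℕ → List ℤ)
    (hf : ∀ i j, i < j → j < m → List.Lex (· < ·) (f i) (f j))
    (hg : ∀ i j, i < j → j < m → List.Lex (· < ·) (g i) (g j))
    (hmem : ∀ a, (∃ i, i < m ∧ f i = a) ↔ (∃ i, i < m ∧ g i = a)) :
    ∀ i, i < m → f i = g i := by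
  haveI : IsAntisymm (List ℤ) (List.Lex (· < ·)) :=
    ⟨fun a b h1 h2 => absurd h2 (lex_asymm h1)⟩
  have hsort : ∀ h : ℕ → List ℤ, (∀ i j, i < j → j < m → List.Lex (· < ·) (h i) (h j)) →
      ((List.range m).map h).Pairwise (List.Lex (· < ·)) := by
    intro h hh
    apply List.pairwise_map.2
    rw [List.pairwise_iff_getElem]
    intro a b ha hb hab
    simp only [List.getElem_range]
    exact hh a b hab (by simpa using hb)
  have hsf := hsort f hf
  have hsg := hsort g hg
  have hnd : ∀ h : ℕ → List ℤ, ((List.range m).map h).Pairwise (List.Lex (· < ·)) →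
      ((List.range m).map h).Nodup := by
    intro h hs
    exact hs.imp (fun {a b} hab => fun he => absurd (he ▸ hab) (lex_irrefl _))
  have hperm : (List.range m).map f ~ (List.range m).map g := by
    rw [List.perm_ext_iff_of_nodup (hnd f hsf) (hnd g hsg)]
    intro a
    simp only [List.mem_map, List.mem_range]
    constructor
    · rintro ⟨i, hi, he⟩
      obtain ⟨i', hi', he'⟩ := (hmem a).1 ⟨i, hi, he⟩
      exact ⟨i', hi', he'⟩
    · rintro ⟨i, hi, he⟩
      obtain ⟨i', hi', he'⟩ := (hmem a).2 ⟨i, hi, he⟩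
      exact ⟨i', hi', he'⟩
  have heq := List.Perm.eq_of_pairwise (fun a b _ _ h1 h2 => absurd h2 (lex_asymm h1)) hsf hsg hperm
  intro i hi
  have h1 : ((List.range m).map f)[i]'(by simpa using hi) = f i := by simp
  have h2 : ((List.range m).map g)[i]'(by simpa using hi) = g i := by simp
  rw [← h1, ← h2]
  congr 1

/-! ### posZ facts -/

lemma posZ_ge (n r : ℕ) : -1 ≤ posZ n r := by
  rw [posZ]; split <;> omega

lemma posZ_lt {r : ℕ} (h : r ≤ n) (hn : 0 < n) : posZ n r < n := by
  rw [posZ]; split <;> omega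

lemma pos_posZ {r : ℕ} (h : r ≤ n) :
    (if posZ n r = -1 then n else (posZ n r).toNat) = r := by
  rw [posZ]
  by_cases hr : r = n
  · simp [hr]
  · rw [if_neg hr, if_neg (by omega)]
    omega

lemma posZ_inv {q : ℤ} (h1 : -1 ≤ q) (h2 : q < n) :
    posZ n (if q = -1 then n else q.toNat) = q := by
  rw [posZ]; split_ifs <;> omega

/-! ### the expected (document, position) at each rank -/

noncomputable def expPair (SA : ℕ → ℕ) (n k i : ℕ) : ℕ × ℕ :=
  if i ≤ k then (i, ((SA i : ℤ) - Omega SA k i).toNat)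
  else (doc SA k (posZ n (SA (i - (k+1)))),
    ((posZ n (SA (i - (k+1)))) - Omega SA k (doc SA k (posZ n (SA (i - (k+1)))))).toNat)


noncomputable def expQ (SA : ℕ → ℕ) (n k i : ℕ) : ℤ :=
  if i ≤ k then (SA i : ℤ) else posZ n (SA (i - (k+1)))

lemma exp_spec (hk : k < n) (hS : Sentinel S n) (hSA : IsSuffixArray S n SA)
    {i : ℕ} (him : i < n+1+(k+1)) :
    (expPair SA n k i).1 ≤ k ∧
    Omega SA k (expPair SA n k i).1 ≤ expQ SA n k i ∧
    expQ SA n k i ≤ SA (expPair SA n k i).1 ∧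
    (expPair SA n k i).2 = (expQ SA n k i - Omega SA k (expPair SA n k i).1).toNat ∧
    (k < i → expQ SA n k i < SA (expPair SA n k i).1) := by
  by_cases hik : i ≤ k
  · simp only [expPair, expQ, if_pos hik]
    exact ⟨hik, le_of_lt (omega_lt SA k i), le_refl _, trivial,
      fun h => absurd hik (not_le.2 h)⟩
  · have hr : i - (k+1) ≤ n := by omega
    have hq1 : -1 ≤ posZ n (SA (i-(k+1))) := posZ_ge n _
    have hq2 : posZ n (SA (i-(k+1))) < n := posZ_lt (SA_le hSA hr) (by omega)
    have hex := doc_exists hS hSA hk hq1 hq2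
    obtain ⟨hd1, hd2, hd3⟩ := doc_spec hex
    simp only [expPair, expQ, if_neg hik]
    exact ⟨hd1, hd2, le_of_lt hd3, trivial, fun _ => hd3⟩

lemma exp_string (hk : k < n) (hS : Sentinel S n) (hSA : IsSuffixArray S n SA)
    {i : ℕ} (him : i < n+1+(k+1)) :
    (wordM S n SA k (expPair SA n k i).1).drop (expPair SA n k i).2 =
      trunc S n SA k (expQ SA n k i) (expPair SA n k i).1 := by
  obtain ⟨h1, h2, h3, h4, h5⟩ := exp_spec hk hS hSA him
  rw [h4]
  exact drop_wordM h2 h3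

lemma exp_mono (hk : k < n) (hS : Sentinel S n) (hSA : IsSuffixArray S n SA)
    {i i' : ℕ} (hii : i < i') (him : i' < n+1+(k+1)) :
    List.Lex (· < ·) (trunc S n SA k (expQ SA n k i) (expPair SA n k i).1)
      (trunc S n SA k (expQ SA n k i') (expPair SA n k i').1) := by
  obtain ⟨h1, h2, h3, h4, h5⟩ := exp_spec hk hS hSA (by omega : i < n+1+(k+1))
  obtain ⟨g1, g2, g3, g4, g5⟩ := exp_spec hk hS hSA him
  by_cases hik' : i' ≤ k
  · have hik : i ≤ k := by omega
    simp only [expPair, expQ, if_pos hik, if_pos hik']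
    rw [trunc_end, trunc_end]
    exact List.Lex.rel (by push_cast; omega)
  · by_cases hik : i ≤ k
    · have he : expPair SA n k i = (i, ((SA i : ℤ) - Omega SA k i).toNat) := by
        simp only [expPair, if_pos hik]
      have heq : expQ SA n k i = (SA i : ℤ) := by simp only [expQ, if_pos hik]
      rw [he, heq]
      simp only []
      rw [trunc_end, trunc_cons (g5 (by omega))]
      refine List.Lex.rel ?_
      have := Sc_nonneg S n (expQ SA n k i')
      have hik2 : (i : ℤ) ≤ k := by exact_mod_cast hik
      omega
    · have hr : i - (k+1) ≤ n := by omega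
      have hr' : i' - (k+1) ≤ n := by omega
      apply cmp_aux hk hS hSA ((SA (expPair SA n k i).1 - expQ SA n k i).toNat)
        _ _ _ _ (le_refl _) h1 g1 h2 (h5 (by omega)) g2 (g5 (by omega))
      have heq : expQ SA n k i = posZ n (SA (i - (k+1))) := by
        simp only [expQ, if_neg hik]
      have heq' : expQ SA n k i' = posZ n (SA (i' - (k+1))) := by
        simp only [expQ, if_neg hik']
      rw [heq, heq', pos_posZ (SA_le hSA hr), pos_posZ (SA_le hSA hr')]
      exact hSA.2 _ _ hr hr' (by omega)

lemma exp_surj (hk : k < n) (hS : Sentinel S n) (hSA : IsSuffixArray S n SA)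
    {j p : ℕ} (hj : j ≤ k) (hp : p ≤ ((SA j : ℤ) - Omega SA k j).toNat) :
    ∃ i, i < n+1+(k+1) ∧ expPair SA n k i = (j, p) := by
  by_cases hpe : p = ((SA j : ℤ) - Omega SA k j).toNat
  · refine ⟨j, by omega, ?_⟩
    simp only [expPair, if_pos hj]
    rw [hpe]
  · have hplt : p < ((SA j : ℤ) - Omega SA k j).toNat := lt_of_le_of_ne hp hpe
    have hSAjn : SA j ≤ n := SA_le hSA (by omega)
    set q : ℤ := Omega SA k j + p with hq
    have hol : Omega SA k j < SA j := omega_lt SA k j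
    have hq1 : Omega SA k j ≤ q := by omega
    have hq2 : q < SA j := by omega
    have hq3 : -1 ≤ q := le_trans (neg_one_le_omega SA k j) hq1
    have hq4 : q < n := by omega
    have hrq : (if q = -1 then n else q.toNat) ≤ n := by split_ifs <;> omega
    obtain ⟨r, hrn, hre⟩ := SA_surj hSA hrq
    refine ⟨(k+1) + r, by omega, ?_⟩
    have hii : ¬ ((k+1) + r ≤ k) := by omega
    have hsub : (k+1) + r - (k+1) = r := by omega
    have hqe : posZ n (SA r) = q := by rw [hre]; exact posZ_inv hq3 hq4
    have hdq : doc SA k q = j := by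
      obtain ⟨hd1, hd2, hd3⟩ := doc_spec (doc_exists hS hSA hk hq3 hq4)
      exact doc_unique hSA hk hd1 hj hd2 hd3 hq1 hq2
    simp only [expPair, if_neg hii, hsub, hqe, hdq]
    rw [show (q - Omega SA k j).toNat = p by omega]

end PartAux

open PartAux

/-- Partition Theorem: with `l = k+1` and `m = (n+1) + l`,
`BWT(W)[i] = BWT(S)[i]` for `i < l`, `BWT(W)[i]` is a marker `#` (a negative
character) for `l ≤ i < 2l`, and `BWT(W)[i] = BWT(S)[i-l]` for `2l ≤ i < m`;
consequently `BWT(S) = BWT(W)[0..l-1] ++ BWT(W)[2l..m-1]`. -/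
theorem partition_theorem (S SA SAW DAW : ℕ → ℕ) (n k : ℕ) (hk : k < n)
    (hS : Sentinel S n) (hSA : IsSuffixArray S n SA)
    (hMSA : IsMSA (wordM S n SA k) (k+1) (n+1+(k+1)) SAW DAW) :
    (∀ i ≤ k, bwtW (wordM S n SA k) SAW DAW i = bwtS S n SA i) ∧
    (∀ i : ℕ, k + 1 ≤ i → i < 2*(k+1) → bwtW (wordM S n SA k) SAW DAW i < 0) ∧
    (∀ i : ℕ, 2*(k+1) ≤ i → i < n+1+(k+1) →
      bwtW (wordM S n SA k) SAW DAW i = bwtS S n SA (i - (k+1))) ∧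
    (List.range (k+1)).map (bwtW (wordM S n SA k) SAW DAW) ++
      (List.range (n - k)).map (fun t => bwtW (wordM S n SA k) SAW DAW (2*(k+1) + t))
      = (List.range (n+1)).map (bwtS S n SA) := by
  obtain ⟨hms1, hms2, hms3⟩ := hMSA
  have hn : 0 < n := by omega
  have hSA0 : SA 0 = n := SA_zero hS hSA hn
  -- identification of (DAW, SAW) with the expected pairs
  have key : ∀ i, i < n+1+(k+1) →
      DAW i = (expPair SA n k i).1 ∧ SAW i = (expPair SA n k i).2 := by
    have hmem : ∀ a : List ℤ,
        (∃ i, i < n+1+(k+1) ∧ (wordM S n SA k (DAW i)).drop (SAW i) = a) ↔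
        (∃ i, i < n+1+(k+1) ∧
          (wordM S n SA k ((expPair SA n k i).1)).drop ((expPair SA n k i).2) = a) := by
      intro a
      constructor
      · rintro ⟨i, him, rfl⟩
        obtain ⟨hD, hP⟩ := hms1 i him
        have hDk : DAW i ≤ k := by omega
        have hPk : SAW i ≤ ((SA (DAW i) : ℤ) - Omega SA k (DAW i)).toNat := by
          rw [length_wordM] at hP; omega
        obtain ⟨i', hi', he'⟩ := exp_surj hk hS hSA hDk hPk
        exact ⟨i', hi', by rw [he']⟩
      · rintro ⟨i, him, rfl⟩
        obtain ⟨h1, h2, h3, h4, h5⟩ := exp_spec hk hS hSA him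
        have hlen : (expPair SA n k i).2 < (wordM S n SA k ((expPair SA n k i).1)).length := by
          rw [length_wordM]; omega
        obtain ⟨i0, ⟨hi0, hD0, hP0⟩, _⟩ := hms2 _ (by omega) _ hlen
        exact ⟨i0, hi0, by rw [hD0, hP0]⟩
    have hstr := enum_unique (m := n+1+(k+1))
      (fun i => (wordM S n SA k (DAW i)).drop (SAW i))
      (fun i => (wordM S n SA k ((expPair SA n k i).1)).drop ((expPair SA n k i).2))
      (fun i j hij hj => hms3 i j (lt_trans hij hj) hj hij)
      (fun i j hij hj => by
        rw [exp_string hk hS hSA (by omega : i < n+1+(k+1)),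
          exp_string hk hS hSA hj]
        exact exp_mono hk hS hSA hij hj)
      hmem
    intro i him
    obtain ⟨hD, hP⟩ := hms1 i him
    have hPk : SAW i ≤ ((SA (DAW i) : ℤ) - Omega SA k (DAW i)).toNat := by
      rw [length_wordM] at hP; omega
    obtain ⟨h1, h2, h3, h4, h5⟩ := exp_spec hk hS hSA him
    exact pair_inj hPk (by omega) (hstr i him)
  -- part 1
  have part1 : ∀ i ≤ k, bwtW (wordM S n SA k) SAW DAW i = bwtS S n SA i := by
    intro i hik
    obtain ⟨hD, hP⟩ := key i (by omega)
    have he : expPair SA n k i = (i, ((SA i : ℤ) - Omega SA k i).toNat) := by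
      simp only [expPair, if_pos hik]
    have hD' : DAW i = i := by rw [hD, he]
    have hP' : SAW i = ((SA i : ℤ) - Omega SA k i).toNat := by rw [hP, he]
    have hol : Omega SA k i < SA i := omega_lt SA k i
    set w : ℕ := ((SA i : ℤ) - Omega SA k i).toNat with hw
    have hw1 : 1 ≤ w := by omega
    rw [bwtW, hD', hP', length_wordM, ← hw]
    have hmod : (w + (w + 1) - 1) % (w + 1) = w - 1 := by
      rw [show w + (w + 1) - 1 = (w - 1) + (w + 1) by omega, Nat.add_mod_right]
      exact Nat.mod_eq_of_lt (by omega)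
    rw [hmod, wordM_getD_lt (by omega), bwtS]
    congr 1
    omega
  -- part 2
  have part2 : ∀ i : ℕ, k + 1 ≤ i → i < 2*(k+1) →
      bwtW (wordM S n SA k) SAW DAW i < 0 := by
    intro i hi1 hi2
    have him : i < n+1+(k+1) := by omega
    obtain ⟨hD, hP⟩ := key i him
    obtain ⟨h1, h2, h3, h4, h5⟩ := exp_spec hk hS hSA him
    set j := (expPair SA n k i).1 with hj
    set w : ℕ := ((SA j : ℤ) - Omega SA k j).toNat with hw
    set r := i - (k+1) with hr
    have hrk : r ≤ k := by omega
    -- the position is 0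
    have hQ : expQ SA n k i = posZ n (SA r) := by
      simp only [expQ, if_neg (show ¬ i ≤ k by omega), ← hr]
    have hP0 : (expPair SA n k i).2 = 0 := by
      rw [h4]
      rcases Nat.eq_zero_or_pos r with hr0 | hrpos
      · rw [hQ, hr0, hSA0] at *
        have : posZ n n = -1 := by rw [posZ, if_pos rfl]
        rw [this]
        have := neg_one_le_omega SA k j
        omega
      · have hSArn : SA r ≠ n := by
          intro hcon
          have : r = 0 := SA_inj hSA (by omega) (by omega) (by rw [hcon, hSA0])
          omega
        have hQ2 : expQ SA n k i = (SA r : ℤ) := by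
          rw [hQ, posZ, if_neg hSArn]
        have hlt : SA r < SA j := by
          have := h5 (by omega)
          rw [hQ2] at this
          exact_mod_cast this
        have := le_omega (k := k) hrk hlt
        rw [hQ2] at *
        omega
    rw [bwtW, hD, hP, hP0, length_wordM, ← hw]
    have hmod : (0 + (w + 1) - 1) % (w + 1) = w := by
      rw [show 0 + (w + 1) - 1 = w by omega]
      exact Nat.mod_eq_of_lt (by omega)
    rw [hmod, hw, wordM_getD_last]
    have : (j : ℤ) ≤ k := by exact_mod_cast h1
    omega
  -- part 3
  have part3 : ∀ i : ℕ, 2*(k+1) ≤ i → i < n+1+(k+1) →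
      bwtW (wordM S n SA k) SAW DAW i = bwtS S n SA (i - (k+1)) := by
    intro i hi1 him
    obtain ⟨hD, hP⟩ := key i him
    obtain ⟨h1, h2, h3, h4, h5⟩ := exp_spec hk hS hSA him
    set j := (expPair SA n k i).1 with hj
    set w : ℕ := ((SA j : ℤ) - Omega SA k j).toNat with hw
    set r := i - (k+1) with hr
    have hrn : r ≤ n := by omega
    have hrk : k + 1 ≤ r := by omega
    have hSArn : SA r ≠ n := by
      intro hcon
      have : r = 0 := SA_inj hSA (by omega) (by omega) (by rw [hcon, hSA0])
      omega
    have hQ2 : expQ SA n k i = (SA r : ℤ) := by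
      simp only [expQ, if_neg (show ¬ i ≤ k by omega), ← hr, posZ, if_neg hSArn]
    have hstrict : expQ SA n k i < SA j := h5 (by omega)
    -- Omega j < SA r : position is at least 1
    have homlt : Omega SA k j < (SA r : ℤ) := by
      rcases omega_cases SA k j with hc | ⟨t, ht, hlt, hte⟩
      · rw [hc]; exact lt_of_lt_of_le (by norm_num) (Int.natCast_nonneg _)
      · rcases lt_or_eq_of_le (hQ2 ▸ h2) with hlt2 | heq2
        · exact hlt2
        · exfalso
          have : SA t = SA r := by omega
          have : t = r := SA_inj hSA (by omega) (by omega) this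
          omega
    set p := (expPair SA n k i).2 with hp
    have hpval : p = ((SA r : ℤ) - Omega SA k j).toNat := by rw [h4, hQ2]
    have hp1 : 1 ≤ p := by omega
    have hpw : p ≤ w := by
      rw [hpval]
      omega
    have hpw2 : p - 1 < w := by omega
    rw [bwtW, hD, hP, length_wordM, ← hw]
    have hmod : (p + (w + 1) - 1) % (w + 1) = p - 1 := by
      rw [show p + (w + 1) - 1 = (p - 1) + (w + 1) by omega, Nat.add_mod_right]
      exact Nat.mod_eq_of_lt (by omega)
    rw [hmod, wordM_getD_lt (by omega), bwtS]
    congr 1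
    omega
  refine ⟨part1, part2, part3, ?_⟩
  have e1 : (List.range (k+1)).map (bwtW (wordM S n SA k) SAW DAW)
      = (List.range (k+1)).map (bwtS S n SA) := by
    apply List.map_congr_left
    intro i hi
    exact part1 i (by simpa using Nat.lt_succ_iff.1 (List.mem_range.1 hi))
  have e2 : (List.range (n-k)).map (fun t => bwtW (wordM S n SA k) SAW DAW (2*(k+1) + t))
      = (List.range (n-k)).map (fun t => bwtS S n SA ((k+1) + t)) := by
    apply List.map_congr_left
    intro t ht
    have ht' : t < n - k := List.mem_range.1 ht
    rw [part3 (2*(k+1) + t) (by omega) (by omega)]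
    congr 1
    omega
  have e3 : (List.range (n+1)).map (bwtS S n SA)
      = (List.range (k+1)).map (bwtS S n SA)
        ++ (List.range (n-k)).map (fun t => bwtS S n SA ((k+1) + t)) := by
    rw [show n + 1 = (k+1) + (n-k) by omega, List.range_add, List.map_append,
      List.map_map]
    rfl
  rw [e1, e2, e3]
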